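/- Let Λ be a linear trace-preserving positive map on 4×4 matrices that maps separable states to separable states. If for λ ∈ (1/2,1] the equation λΛ(Φ₁) + (1−λ)Λ(|01⟩⟨01|) = λΦ₁ + (1−λ)Φ₃ holds, then tr(Φ₃Λ(Φ₁)) ≥ (1−λ)/(2λ). -/

import Mathlib

open Matrix Complex BigOperators
open scoped ComplexOrder

noncomputable section

/-- Standard basis ket of ℂ⁴ -/
def ket (k : Fin 4) : Fin 4 → ℂ := fun j => if j = k then 1 else 0

/-- Tensor product of two qubit vectors, with |ij⟩ ↦ index 2i+j -/
def tens (ψ χ : Fin 2 → ℂ) : Fin 4 → ℂ :=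
  ![ψ 0 * χ 0, ψ 0 * χ 1, ψ 1 * χ 0, ψ 1 * χ 1]

/-- Outer product |v⟩⟨v| -/
def proj (v : Fin 4 → ℂ) : Matrix (Fin 4) (Fin 4) ℂ :=
  Matrix.of fun i j => v i * star (v j)

/-- A qubit vector is a unit vector -/
def unit2 (ψ : Fin 2 → ℂ) : Prop := ∑ j, Complex.normSq (ψ j) = 1

/-- The four Bell vectors -/
def Bell : Fin 4 → (Fin 4 → ℂ) :=
  ![![1 / (Real.sqrt 2 : ℂ), 0, 0, 1 / (Real.sqrt 2 : ℂ)],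
    ![1 / (Real.sqrt 2 : ℂ), 0, 0, -(1 / (Real.sqrt 2 : ℂ))],
    ![0, 1 / (Real.sqrt 2 : ℂ), 1 / (Real.sqrt 2 : ℂ), 0],
    ![0, -(1 / (Real.sqrt 2 : ℂ)), 1 / (Real.sqrt 2 : ℂ), 0]]

/-- Bell projectors Φᵢ (indexed from 0: `Phi 0` is Φ₁, etc.) -/
def Phi (i : Fin 4) : Matrix (Fin 4) (Fin 4) ℂ := proj (Bell i)

/-- Separability of a two-qubit (4×4) matrix -/
def IsSepState (ρ : Matrix (Fin 4) (Fin 4) ℂ) : Prop :=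
  ∃ (n : ℕ) (p : Fin n → ℝ) (ψ χ : Fin n → Fin 2 → ℂ),
    (∀ i, 0 ≤ p i) ∧ (∑ i, p i = 1) ∧ (∀ i, unit2 (ψ i)) ∧ (∀ i, unit2 (χ i)) ∧
    ρ = ∑ i, (p i : ℂ) • proj (tens (ψ i) (χ i))

/-- Density matrix -/
def IsState (ρ : Matrix (Fin 4) (Fin 4) ℂ) : Prop := ρ.PosSemidef ∧ ρ.trace = 1

lemma trace_proj_mul (u w : Fin 4 → ℂ) :
    (proj u * proj w).trace = (Complex.normSq (∑ j, star (u j) * w j) : ℂ) := by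
  rw [← Complex.mul_conj]
  simp [proj, Matrix.trace, Matrix.mul_apply, Fin.sum_univ_four, Matrix.diag, map_add,
    _root_.map_mul]
  ring

lemma c2_eq (w : Fin 4 → ℂ) :
    ∑ j, star (Bell 2 j) * w j = (1/(Real.sqrt 2:ℂ)) * (w 1 + w 2) := by
  simp [Bell, Fin.sum_univ_four]
  ring

lemma trace_phi2_proj (w : Fin 4 → ℂ) :
    (Phi 2 * proj w).trace = ((Complex.normSq (w 1 + w 2) / 2 : ℝ) : ℂ) := by
  rw [Phi, trace_proj_mul, c2_eq, Complex.normSq_mul]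
  have : Complex.normSq (1/(Real.sqrt 2:ℂ)) = 1/2 := by
    rw [Complex.normSq_div, Complex.normSq_ofReal, Real.mul_self_sqrt (by norm_num)]
    simp
  rw [this]; push_cast; ring

lemma sep_bound (σ : Matrix (Fin 4) (Fin 4) ℂ) (h : IsSepState σ) :
    ((Phi 2 * σ).trace).re ≤ 1/2 := by
  obtain ⟨n, p, ψ, χ, hp, hps, hψ, hχ, rfl⟩ := h
  rw [Finset.mul_sum]
  simp only [Matrix.mul_smul, Matrix.trace_sum, Matrix.trace_smul, Complex.re_sum]
  have key : ∀ i, ((p i : ℂ) • (Phi 2 * proj (tens (ψ i) (χ i))).trace).re ≤ p i * (1/2) := by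
    intro i
    rw [trace_phi2_proj]
    have hb : Complex.normSq ((tens (ψ i) (χ i)) 1 + (tens (ψ i) (χ i)) 2) ≤ 1 := by
      have h1 := hψ i
      have h2 := hχ i
      simp only [unit2, Fin.sum_univ_two] at h1 h2
      simp only [tens, Matrix.cons_val_one, Matrix.head_cons, Matrix.cons_val_two,
        Matrix.tail_cons, Matrix.cons_val_zero]
      have habs : ‖ψ i 0 * χ i 1 + ψ i 1 * χ i 0‖
          ≤ ‖ψ i 0‖ * ‖χ i 1‖
            + ‖ψ i 1‖ * ‖χ i 0‖ := by
        calc _ ≤ ‖ψ i 0 * χ i 1‖ + ‖ψ i 1 * χ i 0‖ :=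
              norm_add_le _ _
          _ = _ := by rw [norm_mul, norm_mul]
      have hn : ∀ z : ℂ, Complex.normSq z = ‖z‖ ^ 2 := fun z => (Complex.sq_norm z).symm
      rw [hn, hn] at h1
      rw [hn, hn] at h2
      rw [hn]
      nlinarith [norm_nonneg (ψ i 0), norm_nonneg (ψ i 1),
        norm_nonneg (χ i 0), norm_nonneg (χ i 1),
        norm_nonneg (ψ i 0 * χ i 1 + ψ i 1 * χ i 0), habs,
        sq_nonneg (‖ψ i 0‖ * ‖χ i 0‖
          - ‖ψ i 1‖ * ‖χ i 1‖)]
    have : ((p i : ℂ) • ((Complex.normSq ((tens (ψ i) (χ i)) 1 + (tens (ψ i) (χ i)) 2) / 2 : ℝ) : ℂ)).re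
        = p i * (Complex.normSq ((tens (ψ i) (χ i)) 1 + (tens (ψ i) (χ i)) 2) / 2) := by
      simp [Complex.smul_re]
    rw [this]
    have := hp i
    nlinarith
  calc ∑ i, ((p i : ℂ) • (Phi 2 * proj (tens (ψ i) (χ i))).trace).re
      ≤ ∑ i, p i * (1/2) := Finset.sum_le_sum fun i _ => key i
    _ = 1/2 := by rw [← Finset.sum_mul, hps]; ring

lemma sep_ket1 : IsSepState (proj (ket 1)) := by
  refine ⟨1, ![1], ![![1,0]], ![![0,1]], ?_, ?_, ?_, ?_, ?_⟩
  · intro i; fin_cases i <;> norm_num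
  · simp
  · intro i; fin_cases i <;> simp [unit2, Fin.sum_univ_two]
  · intro i; fin_cases i <;> simp [unit2, Fin.sum_univ_two]
  · rw [Fin.sum_univ_one]
    simp only [Matrix.cons_val_zero]
    have : tens ![1,0] ![0,1] = ket 1 := by
      funext j; fin_cases j <;> simp [tens, ket]
    rw [this]; simp


theorem trace_phi3_lower_bound
    (Λ : Matrix (Fin 4) (Fin 4) ℂ →ₗ[ℂ] Matrix (Fin 4) (Fin 4) ℂ)
    (htr : ∀ ρ, (Λ ρ).trace = ρ.trace)
    (hpos : ∀ ρ, ρ.PosSemidef → (Λ ρ).PosSemidef)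
    (hne : ∀ ρ, IsSepState ρ → IsSepState (Λ ρ))
    (l : ℝ) (hl : 1 / 2 < l) (hl1 : l ≤ 1)
    (heq : (l : ℂ) • Λ (Phi 0) + ((1 - l : ℝ) : ℂ) • Λ (proj (ket 1))
      = (l : ℂ) • Phi 0 + ((1 - l : ℝ) : ℂ) • Phi 2) :
    (1 - l) / (2 * l) ≤ ((Phi 2 * Λ (Phi 0)).trace).re := by
  have hσ : ((Phi 2 * Λ (proj (ket 1))).trace).re ≤ 1/2 :=
    sep_bound _ (hne _ sep_ket1)
  have h20 : (Phi 2 * Phi 0).trace = 0 := by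
    show (Phi 2 * proj (Bell 0)).trace = 0
    rw [trace_phi2_proj]
    simp [Bell]
  have h22 : (Phi 2 * Phi 2).trace = 1 := by
    show (Phi 2 * proj (Bell 2)).trace = 1
    rw [trace_phi2_proj]
    have : Complex.normSq (Bell 2 1 + Bell 2 2) = 2 := by
      simp only [Bell, Matrix.cons_val_two, Matrix.tail_cons, Matrix.head_cons,
        Matrix.cons_val_one, Matrix.cons_val_zero]
      rw [show (1 / (Real.sqrt 2 : ℂ) + 1 / (Real.sqrt 2 : ℂ)) = ((2 / Real.sqrt 2 : ℝ) : ℂ) by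
        push_cast; ring]
      rw [Complex.normSq_ofReal]
      rw [div_mul_div_comm, Real.mul_self_sqrt (by norm_num)]
      norm_num
    rw [this]; norm_num
  have key := congrArg (fun M => ((Phi 2 * M).trace).re) heq
  simp only [Matrix.mul_add, Matrix.mul_smul, Matrix.trace_add, Matrix.trace_smul,
    h20, h22, smul_eq_mul, mul_zero, mul_one, Complex.add_re, Complex.mul_re,
    Complex.ofReal_re, Complex.ofReal_im, zero_mul, sub_zero, Complex.zero_re,
    Complex.one_re, Complex.zero_im, Complex.one_im, mul_zero] at key
  -- key : l * T.re + (1-l) * S.re = l*0 + (1-l)*1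
  set T := ((Phi 2 * Λ (Phi 0)).trace).re
  set S := ((Phi 2 * Λ (proj (ket 1))).trace).re
  have hl0 : 0 < l := by linarith
  rw [div_le_iff₀ (by linarith)]
  nlinarith [key, hσ]
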